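/- arXiv:2501.00850 — 2 statements merged into one kernel-verified Lean document; each statement's English description precedes it below -/
import Mathlib

section
/- For every natural number n, the following three statements are equivalent: (i) s₂(n) = s₃(n); (ii) ν₂(n!) = 2·ν₃(n!); (iii) there exists a natural number k such that 12^k divides n! and n!/12^k is coprime to 12 (i.e. 12^k exactly divides n!). -/
/-- Sum of digits of `n` in base `q`. -/
def digitSum (q n : ℕ) : ℕ := (Nat.digits q n).sum

private lemma twelve_pow (k : ℕ) : (12 : ℕ) ^ k = 2 ^ (2 * k) * 3 ^ k := by
  rw [pow_mul, ← mul_pow]; norm_num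

private lemma v2_twelve_pow (k : ℕ) : padicValNat 2 ((12 : ℕ) ^ k) = 2 * k := by
  have h2p : Fact (Nat.Prime 2) := ⟨Nat.prime_two⟩
  rw [twelve_pow, padicValNat.mul (by positivity) (by positivity), padicValNat.prime_pow,
    padicValNat.eq_zero_of_not_dvd (fun hd =>
      absurd (Nat.Prime.dvd_of_dvd_pow Nat.prime_two hd) (by norm_num)), add_zero]

private lemma v3_twelve_pow (k : ℕ) : padicValNat 3 ((12 : ℕ) ^ k) = k := by
  have h3p : Fact (Nat.Prime 3) := ⟨Nat.prime_three⟩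
  rw [twelve_pow, padicValNat.mul (by positivity) (by positivity), padicValNat.prime_pow,
    padicValNat.eq_zero_of_not_dvd (fun hd =>
      absurd (Nat.Prime.dvd_of_dvd_pow Nat.prime_three hd) (by norm_num)), zero_add]

theorem stmt4 (n : ℕ) :
    (digitSum 2 n = digitSum 3 n ↔
        padicValNat 2 (Nat.factorial n) = 2 * padicValNat 3 (Nat.factorial n)) ∧
    (padicValNat 2 (Nat.factorial n) = 2 * padicValNat 3 (Nat.factorial n) ↔
        ∃ k : ℕ, 12 ^ k ∣ Nat.factorial n ∧
          Nat.gcd 12 (Nat.factorial n / 12 ^ k) = 1) := by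
  have h2p : Fact (Nat.Prime 2) := ⟨Nat.prime_two⟩
  have h3p : Fact (Nat.Prime 3) := ⟨Nat.prime_three⟩
  have h2 : padicValNat 2 (Nat.factorial n) = n - (Nat.digits 2 n).sum := by
    have := sub_one_mul_padicValNat_factorial (p := 2) n
    simpa using this
  have h3 : 2 * padicValNat 3 (Nat.factorial n) = n - (Nat.digits 3 n).sum := by
    have := sub_one_mul_padicValNat_factorial (p := 3) n
    simpa using this
  have hd2 : (Nat.digits 2 n).sum ≤ n := Nat.digit_sum_le 2 n
  have hd3 : (Nat.digits 3 n).sum ≤ n := Nat.digit_sum_le 3 n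
  have hfne : Nat.factorial n ≠ 0 := Nat.factorial_ne_zero n
  constructor
  · rw [h2, h3]
    unfold digitSum
    omega
  · constructor
    · intro h
      set k := padicValNat 3 (Nat.factorial n) with hk
      have hdvd : (12 : ℕ) ^ k ∣ Nat.factorial n := by
        rw [twelve_pow]
        refine Nat.Coprime.mul_dvd_of_dvd_of_dvd
          (Nat.Coprime.pow _ _ (by norm_num)) ?_ pow_padicValNat_dvd
        rw [← h]; exact pow_padicValNat_dvd
      refine ⟨k, hdvd, ?_⟩
      obtain ⟨q, hq⟩ := hdvd
      have hqne : q ≠ 0 := by rintro rfl; rw [mul_zero] at hq; exact hfne hq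
      have hv2q : padicValNat 2 q = 0 := by
        have h' := h
        rw [hq, padicValNat.mul (by positivity) hqne, v2_twelve_pow] at h'
        omega
      have hv3q : padicValNat 3 q = 0 := by
        have hkk := hk
        rw [hq, padicValNat.mul (by positivity) hqne, v3_twelve_pow] at hkk
        omega
      have h2nd : ¬ (2 ∣ q) := fun hd =>
        ((dvd_iff_padicValNat_ne_zero hqne).mp hd) hv2q
      have h3nd : ¬ (3 ∣ q) := fun hd =>
        ((dvd_iff_padicValNat_ne_zero hqne).mp hd) hv3q
      have hqeq : Nat.factorial n / 12 ^ k = q := by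
        rw [hq, Nat.mul_div_cancel_left _ (by positivity)]
      rw [hqeq]
      have : Nat.Coprime 12 q := by
        have c2 : Nat.Coprime 2 q := (Nat.Prime.coprime_iff_not_dvd Nat.prime_two).mpr h2nd
        have c3 : Nat.Coprime 3 q := (Nat.Prime.coprime_iff_not_dvd Nat.prime_three).mpr h3nd
        have : (12 : ℕ) = 2 * 2 * 3 := by norm_num
        rw [this]
        exact Nat.Coprime.mul (Nat.Coprime.mul c2 c2) c3
      exact this
    · rintro ⟨k, hdvd, hcop⟩
      obtain ⟨q, hq⟩ := hdvd
      have hqne : q ≠ 0 := by rintro rfl; rw [mul_zero] at hq; exact hfne hq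
      have hqeq : Nat.factorial n / 12 ^ k = q := by
        rw [hq, Nat.mul_div_cancel_left _ (by positivity)]
      rw [hqeq] at hcop
      have h2nd : ¬ (2 ∣ q) := fun hd => by
        have : (2 : ℕ) ∣ Nat.gcd 12 q := Nat.dvd_gcd (by norm_num) hd
        rw [hcop] at this; norm_num at this
      have h3nd : ¬ (3 ∣ q) := fun hd => by
        have : (3 : ℕ) ∣ Nat.gcd 12 q := Nat.dvd_gcd (by norm_num) hd
        rw [hcop] at this; norm_num at this
      rw [hq, padicValNat.mul (by positivity) hqne, padicValNat.mul (by positivity) hqne,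
        v2_twelve_pow, v3_twelve_pow, padicValNat.eq_zero_of_not_dvd h2nd,
        padicValNat.eq_zero_of_not_dvd h3nd]
      ring
end

section
/- Let Q ≥ 1 be an integer. There exists a constant C = C(Q) such that the following holds. Let J be a finite nonempty interval of integers and g : J → ℂ with |g(n)| = 1 for all n ∈ J. Then for all positive integers m₀, …, m_{Q−1} and R ≥ 1, | (1/|J|)·Σ_{n ∈ J} g(n) |^{2^Q} ≤ C·( (1/R^Q)·Σ_{r ∈ {1,…,R−1}^Q} | K(r₀·m₀, …, r_{Q−1}·m_{Q−1}) | + (m₀ + ⋯ + m_{Q−1})·R/|J| + 1/R ), where for integers t₀, …, t_{Q−1}, K(t₀, …, t_{Q−1}) = (1/|J|)·Σ_{n ∈ J} Π_{ε ∈ {0,1}^Q} 𝒞^{|ε|} g( n + Σ_{0 ≤ ℓ < Q} ε_ℓ·t_ℓ ), with 𝒞 denoting complex conjugation (applied |ε| = ε₀ + ⋯ + ε_{Q−1} times) and where g is extended by 0 outside J. -/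
set_option maxHeartbeats 1000000

noncomputable def Aavg (a b : ℤ) (f : ℤ → ℂ) : ℂ :=
  ((Finset.Icc a b).card : ℂ)⁻¹ * ∑ n ∈ Finset.Icc a b, f n

noncomputable def boxfn (Q : ℕ) (f : ℤ → ℂ) (t : Fin Q → ℤ) (n : ℤ) : ℂ :=
  ∏ ε : Fin Q → Bool,
    if Even (Finset.univ.filter (fun ℓ => ε ℓ = true)).card then
      f (n + ∑ ℓ, (if ε ℓ then t ℓ else 0))
    else
      (starRingEnd ℂ) (f (n + ∑ ℓ, (if ε ℓ then t ℓ else 0)))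

lemma abs_Aavg_le_one {a b : ℤ} {f : ℤ → ℂ} (hf : ∀ n, ‖f n‖ ≤ 1) :
    ‖Aavg a b f‖ ≤ 1 := by
  unfold Aavg
  rw [norm_mul]
  rcases Nat.eq_zero_or_pos (Finset.Icc a b).card with h | h
  · simp [h]
  calc ‖((Finset.Icc a b).card : ℂ)⁻¹‖ * ‖∑ n ∈ Finset.Icc a b, f n‖
      ≤ ((Finset.Icc a b).card : ℝ)⁻¹ * ∑ n ∈ Finset.Icc a b, ‖f n‖ := by
        rw [norm_inv, Complex.norm_natCast]
        exact mul_le_mul_of_nonneg_left (by simpa using norm_sum_le (Finset.Icc a b) f) (by positivity)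
    _ ≤ ((Finset.Icc a b).card : ℝ)⁻¹ * ((Finset.Icc a b).card * 1) := by
        refine mul_le_mul_of_nonneg_left ?_ (by positivity)
        calc ∑ n ∈ Finset.Icc a b, ‖f n‖ ≤ ∑ _n ∈ Finset.Icc a b, (1:ℝ) := Finset.sum_le_sum (fun n _ => hf n)
          _ = (Finset.Icc a b).card * 1 := by simp
    _ ≤ 1 := by
        rw [mul_one, inv_mul_cancel₀]
        positivity

lemma boxfn_bounded {Q : ℕ} {f : ℤ → ℂ} (hf : ∀ n, ‖f n‖ ≤ 1)
    (t : Fin Q → ℤ) (n : ℤ) : ‖boxfn Q f t n‖ ≤ 1 := by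
  unfold boxfn
  rw [norm_prod]
  refine Finset.prod_le_one (fun ε _ => by positivity) (fun ε _ => ?_)
  split <;> simp [hf]

lemma boxfn_zero {a b : ℤ} {Q : ℕ} {f : ℤ → ℂ} (hf : ∀ n ∉ Finset.Icc a b, f n = 0)
    (t : Fin Q → ℤ) (n : ℤ) (hn : n ∉ Finset.Icc a b) : boxfn Q f t n = 0 := by
  unfold boxfn
  refine Finset.prod_eq_zero (Finset.mem_univ (fun _ => false)) ?_
  simp [hf n hn]

lemma snoc_card (Q : ℕ) (ε' : Fin Q → Bool) (c : Bool) :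
    (Finset.univ.filter (fun ℓ : Fin (Q+1) => (Fin.snoc ε' c : Fin (Q+1) → Bool) ℓ = true)).card
      = (Finset.univ.filter (fun ℓ : Fin Q => ε' ℓ = true)).card + (if c then 1 else 0) := by
  rw [Finset.card_filter, Finset.card_filter, Fin.sum_univ_castSucc]
  simp

lemma snoc_sum (Q : ℕ) (ε' : Fin Q → Bool) (c : Bool) (r : Fin Q → ℤ) (t : ℤ) :
    (∑ ℓ : Fin (Q+1), if (Fin.snoc ε' c : Fin (Q+1) → Bool) ℓ then (Fin.snoc r t : Fin (Q+1) → ℤ) ℓ else (0:ℤ))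
      = (∑ ℓ, if ε' ℓ then r ℓ else 0) + (if c then t else 0) := by
  rw [Fin.sum_univ_castSucc]
  simp

lemma boxfn_succ (Q : ℕ) (f : ℤ → ℂ) (r : Fin Q → ℤ) (t : ℤ) (n : ℤ) :
    boxfn (Q+1) f (Fin.snoc r t) n
      = (starRingEnd ℂ) (boxfn Q f r (n + t)) * boxfn Q f r n := by
  unfold boxfn
  rw [map_prod, ← Finset.prod_mul_distrib,
    ← Equiv.prod_comp (Fin.snocEquiv (fun _ => Bool)), Fintype.prod_prod_type,
    Fintype.prod_bool]
  rw [← Finset.prod_mul_distrib]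
  refine Finset.prod_congr rfl (fun ε' _ => ?_)
  have hc1 := snoc_card Q ε' true
  have hc0 := snoc_card Q ε' false
  have hs1 := snoc_sum Q ε' true r t
  have hs0 := snoc_sum Q ε' false r t
  simp only [Fin.snocEquiv_apply]
  rw [hc1, hc0, hs1, hs0]
  simp only [if_true, if_false, add_zero, Nat.even_add_one]
  have harg : n + ((∑ ℓ, if ε' ℓ then r ℓ else 0) + t) = (n + t) + ∑ ℓ, if ε' ℓ then r ℓ else 0 := by ring
  rw [harg]
  by_cases hk : Even (Finset.univ.filter (fun ℓ : Fin Q => ε' ℓ = true)).card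
  · simp [hk]
  · simp [hk]

lemma vdc_step (a b : ℤ) (hab : a ≤ b) (f : ℤ → ℂ) (hf1 : ∀ n, ‖f n‖ ≤ 1)
    (hf0 : ∀ n ∉ Finset.Icc a b, f n = 0) (m : ℕ) (hm : 1 ≤ m) (R : ℕ) (hR : 1 ≤ R) :
    ‖Aavg a b f‖ ^ 2
      ≤ 3 * ((R : ℝ)⁻¹ * ∑ s ∈ Finset.Icc 1 (R-1),
              ‖Aavg a b (fun n => (starRingEnd ℂ) (f (n + ((s*m : ℕ):ℤ))) * f n)‖
            + (m : ℝ) * R / (Finset.Icc a b).card + (R : ℝ)⁻¹) := by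
  classical
  set J := Finset.Icc a b with hJ
  set J' := Finset.Icc (a - R*m) b with hJ'
  set N : ℝ := (J.card : ℝ) with hN
  have hNcard : J.card = (b + 1 - a).toNat := Int.card_Icc a b
  have hN1 : (1:ℝ) ≤ N := by
    rw [hN, hNcard]
    have : 1 ≤ (b + 1 - a).toNat := by omega
    exact_mod_cast this
  have hNpos : (0:ℝ) < N := by linarith
  have hRpos : (0:ℝ) < (R:ℝ) := by exact_mod_cast hR
  have hN' : ((J'.card : ℝ)) = N + R*m := by
    have hM : ((R:ℤ)*m) = ((R*m : ℕ) : ℤ) := by push_cast; ring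
    rw [hJ', hN, hNcard, hM, Int.card_Icc]
    have h2 : (b + 1 - (a - ((R*m:ℕ):ℤ))).toNat = (b+1-a).toNat + (R*m) := by omega
    rw [h2]
    push_cast
    ring
  -- the generic shift lemma
  have hsub : ∀ c : ℤ, 0 ≤ c → c ≤ (R:ℤ)*m → ∀ F : ℤ → ℂ, (∀ k ∉ J, F k = 0) →
      ∑ n ∈ J', F (n + c) = ∑ k ∈ J, F k := by
    intro c hc0 hc F hF
    have h1 : ∑ n ∈ J', F (n + c) = ∑ k ∈ Finset.Icc (a - R*m + c) (b + c), F k := by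
      rw [← Finset.map_add_right_Icc, Finset.sum_map]
      simp [hJ']
    rw [h1]
    refine (Finset.sum_subset (Finset.Icc_subset_Icc (by linarith) (by linarith)) ?_).symm
    intro x _ hx
    exact hF x hx
  -- the correlation averages
  set x : ℕ → ℝ := fun d =>
    ‖Aavg a b (fun n => (starRingEnd ℂ) (f (n + ((d*m : ℕ):ℤ))) * f n)‖ with hx
  have hx0 : ∀ d, 0 ≤ x d := fun d => norm_nonneg _
  have hx1 : ∀ d, x d ≤ 1 := by
    intro d
    apply abs_Aavg_le_one
    intro n
    rw [norm_mul]
    have := hf1 (n + ((d*m : ℕ):ℤ))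
    have := hf1 n
    calc ‖(starRingEnd ℂ) (f (n + ((d*m : ℕ):ℤ)))‖ * ‖f n‖
        ≤ 1 * 1 := by
          apply mul_le_mul _ (hf1 n) (norm_nonneg _) zero_le_one
          rw [Complex.norm_conj]; exact hf1 _
      _ = 1 := by ring
  set S : ℝ := ∑ d ∈ Finset.Icc 1 (R-1), x d with hS
  have hS0 : 0 ≤ S := Finset.sum_nonneg (fun d _ => hx0 d)
  have hSR : S ≤ R := by
    calc S ≤ ∑ d ∈ Finset.Icc 1 (R-1), (1:ℝ) := Finset.sum_le_sum (fun d _ => hx1 d)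
      _ = ((R:ℝ) - 1) := by
          rw [Finset.sum_const, Nat.card_Icc]
          have : R - 1 + 1 - 1 = R - 1 := by omega
          rw [this]
          have hcast : ((R-1 : ℕ) : ℝ) = (R:ℝ) - 1 := by
            have : (1:ℕ) ≤ R := hR
            push_cast [this]
            ring
          simp [hcast]
      _ ≤ R := by linarith
  -- Sc
  set Sc : ℕ → ℕ → ℂ := fun r s =>
    ∑ n ∈ J', f (n + ((r*m : ℕ):ℤ)) * (starRingEnd ℂ) (f (n + ((s*m : ℕ):ℤ))) with hSc
  have hScD : ∀ r s : ℕ, r ≤ s → s < R → ‖Sc r s‖ = N * x (s - r) := by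
    intro r s hrs hsR
    have hc : ((r*m : ℕ):ℤ) ≤ (R:ℤ)*m := by
      have : r*m ≤ R*m := Nat.mul_le_mul_right m (le_of_lt (lt_of_le_of_lt hrs hsR))
      exact_mod_cast this
    have key : Sc r s = ∑ k ∈ J, f k * (starRingEnd ℂ) (f (k + (((s-r)*m : ℕ):ℤ))) := by
      rw [hSc]
      have := hsub ((r*m : ℕ):ℤ) (by positivity) hc
        (fun k => f k * (starRingEnd ℂ) (f (k + (((s-r)*m : ℕ):ℤ))))
        (fun k hk => by simp [hf0 k hk])
      rw [← this]
      refine Finset.sum_congr rfl (fun n _ => ?_)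
      congr 2
      have : ((s-r : ℕ):ℤ) = (s:ℤ) - r := by
        exact_mod_cast Int.ofNat_sub hrs
      push_cast [this]
      ring
    have hsum : ∑ n ∈ J, (starRingEnd ℂ) (f (n + (((s-r)*m : ℕ):ℤ))) * f n = Sc r s := by
      rw [key]
      exact Finset.sum_congr rfl (fun k _ => mul_comm _ _)
    have hxv : x (s - r) = N⁻¹ * ‖Sc r s‖ := by
      have hA : Aavg a b (fun n => (starRingEnd ℂ) (f (n + (((s-r)*m : ℕ):ℤ))) * f n)
          = ((J.card : ℂ))⁻¹ * Sc r s := by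
        simp only [Aavg]
        rw [← hJ, hsum]
      rw [hx]
      simp only [hA, norm_mul, norm_inv, Complex.norm_natCast, hN]
    rw [hxv, ← mul_assoc, mul_inv_cancel₀ (ne_of_gt hNpos), one_mul]
  have hScSymm : ∀ r s : ℕ, Sc r s = (starRingEnd ℂ) (Sc s r) := by
    intro r s
    rw [hSc, map_sum]
    refine Finset.sum_congr rfl (fun n _ => ?_)
    rw [map_mul, Complex.conj_conj]
    ring
  -- row bound
  have hrow : ∀ r, r < R → ∑ s ∈ Finset.range R, ‖Sc r s‖ ≤ N * (1 + 2*S) := by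
    intro r hr
    have hb1 : ∑ s ∈ Finset.range r, ‖Sc r s‖ ≤ N * S := by
      have he : ∀ s ∈ Finset.range r, ‖Sc r s‖ = N * x (r - s) := by
        intro s hs
        rw [Finset.mem_range] at hs
        rw [hScSymm r s, Complex.norm_conj]
        exact hScD s r hs.le hr
      rw [Finset.sum_congr rfl he, ← Finset.mul_sum]
      refine mul_le_mul_of_nonneg_left ?_ hNpos.le
      have hbij : ∑ s ∈ Finset.range r, x (r - s) = ∑ d ∈ Finset.Icc 1 r, x d := by
        refine Finset.sum_nbij' (fun s => r - s) (fun d => r - d) ?_ ?_ ?_ ?_ ?_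
        · intro s hs; simp only [Finset.mem_range] at hs; simp only [Finset.mem_Icc]; omega
        · intro d hd; simp only [Finset.mem_Icc] at hd; simp only [Finset.mem_range]; omega
        · intro s hs; simp only [Finset.mem_range] at hs; omega
        · intro d hd; simp only [Finset.mem_Icc] at hd; omega
        · intro s hs; rfl
      rw [hbij, hS]
      refine Finset.sum_le_sum_of_subset_of_nonneg (Finset.Icc_subset_Icc le_rfl (by omega)) ?_
      intro d _ _; exact hx0 d
    have hb2 : ∑ s ∈ Finset.Ico (r+1) R, ‖Sc r s‖ ≤ N * S := by
      have he : ∀ s ∈ Finset.Ico (r+1) R, ‖Sc r s‖ = N * x (s - r) := by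
        intro s hs
        rw [Finset.mem_Ico] at hs
        exact hScD r s (by omega) hs.2
      rw [Finset.sum_congr rfl he, ← Finset.mul_sum]
      refine mul_le_mul_of_nonneg_left ?_ hNpos.le
      have hbij : ∑ s ∈ Finset.Ico (r+1) R, x (s - r) = ∑ d ∈ Finset.Icc 1 (R-1-r), x d := by
        refine Finset.sum_nbij' (fun s => s - r) (fun d => d + r) ?_ ?_ ?_ ?_ ?_
        · intro s hs; simp only [Finset.mem_Ico] at hs; simp only [Finset.mem_Icc]; omega
        · intro d hd; simp only [Finset.mem_Icc] at hd; simp only [Finset.mem_Ico]; omega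
        · intro s hs; simp only [Finset.mem_Ico] at hs; omega
        · intro d hd; simp only [Finset.mem_Icc] at hd; omega
        · intro s hs; rfl
      rw [hbij, hS]
      refine Finset.sum_le_sum_of_subset_of_nonneg (Finset.Icc_subset_Icc le_rfl (by omega)) ?_
      intro d _ _; exact hx0 d
    have hdiag : ‖Sc r r‖ ≤ N := by
      have h0 : ‖Sc r r‖ = N * x 0 := by
        have := hScD r r le_rfl hr
        simpa using this
      rw [h0]
      nlinarith [hx1 0, hx0 0]
    have hsplit : ∑ s ∈ Finset.range R, ‖Sc r s‖
        = (∑ s ∈ Finset.range r, ‖Sc r s‖) + ‖Sc r r‖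
          + ∑ s ∈ Finset.Ico (r+1) R, ‖Sc r s‖ := by
      rw [Finset.range_eq_Ico, ← Finset.sum_Ico_consecutive _ (Nat.zero_le r) hr.le,
        Finset.sum_eq_sum_Ico_succ_bot hr, ← Finset.range_eq_Ico]
      ring
    rw [hsplit]
    linarith
  -- the long sums T
  set T : ℤ → ℂ := fun n => ∑ r ∈ Finset.range R, f (n + ((r*m : ℕ):ℤ)) with hT
  have hshift : ∀ r ∈ Finset.range R, ∑ n ∈ J', f (n + ((r*m : ℕ):ℤ)) = ∑ k ∈ J, f k := by
    intro r hr
    rw [Finset.mem_range] at hr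
    refine hsub _ (by positivity) ?_ f hf0
    have h2 : r*m ≤ R*m := Nat.mul_le_mul_right m hr.le
    have h3 : ((r*m : ℕ):ℤ) ≤ ((R*m : ℕ):ℤ) := by exact_mod_cast h2
    calc ((r*m : ℕ):ℤ) ≤ ((R*m : ℕ):ℤ) := h3
      _ = (R:ℤ)*m := by push_cast; ring
  have hTsum : ∑ n ∈ J', T n = (R:ℂ) * ∑ k ∈ J, f k := by
    simp only [hT]
    rw [Finset.sum_comm, Finset.sum_congr rfl hshift, Finset.sum_const, Finset.card_range]
    simp [nsmul_eq_mul]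
  have hexpand : ∑ n ∈ J', T n * (starRingEnd ℂ) (T n)
      = ∑ r ∈ Finset.range R, ∑ s ∈ Finset.range R, Sc r s := by
    have h1 : ∀ n, T n * (starRingEnd ℂ) (T n)
        = ∑ r ∈ Finset.range R, ∑ s ∈ Finset.range R,
            f (n + ((r*m : ℕ):ℤ)) * (starRingEnd ℂ) (f (n + ((s*m : ℕ):ℤ))) := by
      intro n
      simp only [hT, map_sum]
      rw [Finset.sum_mul_sum]
    rw [Finset.sum_congr rfl (fun n _ => h1 n), Finset.sum_comm]
    refine Finset.sum_congr rfl (fun r _ => ?_)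
    rw [Finset.sum_comm]
  have hdouble : ‖∑ n ∈ J', T n * (starRingEnd ℂ) (T n)‖ ≤ R * (N * (1 + 2*S)) := by
    rw [hexpand]
    calc ‖∑ r ∈ Finset.range R, ∑ s ∈ Finset.range R, Sc r s‖
        ≤ ∑ r ∈ Finset.range R, ‖∑ s ∈ Finset.range R, Sc r s‖ := by
          simpa using norm_sum_le (Finset.range R)
            (fun r => ∑ s ∈ Finset.range R, Sc r s)
      _ ≤ ∑ r ∈ Finset.range R, ∑ s ∈ Finset.range R, ‖Sc r s‖ := by
          refine Finset.sum_le_sum (fun r _ => ?_)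
          simpa using norm_sum_le (Finset.range R) (fun s => Sc r s)
      _ ≤ ∑ r ∈ Finset.range R, N * (1 + 2*S) := by
          refine Finset.sum_le_sum (fun r hr => hrow r (Finset.mem_range.mp hr))
      _ = R * (N * (1 + 2*S)) := by rw [Finset.sum_const, Finset.card_range]; simp
  have hTT : ∑ n ∈ J', (‖T n‖)^2
      = ‖∑ n ∈ J', T n * (starRingEnd ℂ) (T n)‖ := by
    have h1 : ∑ n ∈ J', T n * (starRingEnd ℂ) (T n)
        = ((∑ n ∈ J', Complex.normSq (T n) : ℝ) : ℂ) := by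
      push_cast
      exact Finset.sum_congr rfl (fun n _ => (Complex.mul_conj (T n)))
    rw [h1, Complex.norm_real, Real.norm_of_nonneg (Finset.sum_nonneg (fun n _ => Complex.normSq_nonneg _))]
    exact Finset.sum_congr rfl (fun n _ => Complex.sq_norm (T n))
  have hsq : (∑ n ∈ J', ‖T n‖)^2 ≤ (N + R*m) * ∑ n ∈ J', (‖T n‖)^2 := by
    have := sq_sum_le_card_mul_sum_sq (s := J') (f := fun n => ‖T n‖)
    rw [hN'] at this
    exact this
  have hRP : (R:ℝ) * ‖∑ k ∈ J, f k‖ ≤ ∑ n ∈ J', ‖T n‖ := by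
    have h1 : ‖∑ n ∈ J', T n‖ = (R:ℝ) * ‖∑ k ∈ J, f k‖ := by
      rw [hTsum, norm_mul, Complex.norm_natCast]
    rw [← h1]
    simpa using norm_sum_le J' T
  set P : ℝ := ‖∑ k ∈ J, f k‖ with hP
  have hP0 : 0 ≤ P := norm_nonneg _
  have hkey : ((R:ℝ) * P)^2 ≤ (N + R*m) * ((R:ℝ) * (N * (1 + 2*S))) := by
    calc ((R:ℝ) * P)^2 ≤ (∑ n ∈ J', ‖T n‖)^2 := by
          have h0 : (0:ℝ) ≤ (R:ℝ) * P := by positivity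
          exact pow_le_pow_left₀ h0 hRP 2
      _ ≤ (N + R*m) * ∑ n ∈ J', (‖T n‖)^2 := hsq
      _ = (N + R*m) * ‖∑ n ∈ J', T n * (starRingEnd ℂ) (T n)‖ := by rw [hTT]
      _ ≤ (N + R*m) * ((R:ℝ) * (N * (1 + 2*S))) := by
          refine mul_le_mul_of_nonneg_left hdouble ?_
          linarith [mul_nonneg (Nat.cast_nonneg R : (0:ℝ) ≤ R) (Nat.cast_nonneg m : (0:ℝ) ≤ m)]
  -- final assembly
  have hAavg : ‖Aavg a b f‖ = P / N := by
    simp only [Aavg]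
    rw [← hJ, norm_mul, norm_inv, Complex.norm_natCast, ← hN, ← hP]
    ring
  have hm1 : (1:ℝ) ≤ (m:ℝ) := by exact_mod_cast hm
  have hR1 : (1:ℝ) ≤ (R:ℝ) := by exact_mod_cast hR
  rw [hAavg, div_pow]
  have e2 : 3*((R:ℝ)⁻¹ * S + (m:ℝ)*R/N + (R:ℝ)⁻¹) = 3*(S*N + m*(R:ℝ)^2 + N)/(N*R) := by
    field_simp
  rw [e2, div_le_div_iff₀ (pow_pos hNpos 2) (mul_pos hNpos hRpos)]
  have hpoly : (N + R*m) * (1 + 2*S) ≤ 3*(S*N + m*(R:ℝ)^2 + N) := by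
    nlinarith [mul_nonneg (mul_nonneg (sub_nonneg.mpr hSR) hRpos.le) (by positivity : (0:ℝ) ≤ (m:ℝ)),
      mul_nonneg hS0 (by linarith : (0:ℝ) ≤ N), hS0, hN1, hm1, hR1]
  nlinarith [mul_le_mul_of_nonneg_right hkey hNpos.le,
    mul_le_mul_of_nonneg_right hpoly (le_of_lt (mul_pos (pow_pos hNpos 2) hRpos)),
    hNpos, hRpos, hP0, hS0, hN1]

lemma key (Q : ℕ) : ∃ C : ℝ, 1 ≤ C ∧ ∀ a b : ℤ, a ≤ b → ∀ f : ℤ → ℂ,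
    (∀ n, ‖f n‖ ≤ 1) → (∀ n ∉ Finset.Icc a b, f n = 0) →
    ∀ m : Fin Q → ℕ, (∀ ℓ, 1 ≤ m ℓ) → ∀ R : ℕ, 1 ≤ R →
    ‖Aavg a b f‖ ^ (2 ^ Q)
      ≤ C * (((R : ℝ) ^ Q)⁻¹ *
            (∑ r ∈ Fintype.piFinset (fun _ : Fin Q => Finset.Icc 1 (R - 1)),
              ‖Aavg a b (boxfn Q f (fun ℓ => ((r ℓ * m ℓ : ℕ) : ℤ)))‖)
          + (∑ ℓ, (m ℓ : ℝ)) * R / (Finset.Icc a b).card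
          + (R : ℝ)⁻¹) := by
  induction Q with
  | zero =>
    refine ⟨1, le_rfl, ?_⟩
    intro a b hab f hf1 hf0 m hm R hR
    have hbox : ∀ (t : Fin 0 → ℤ), boxfn 0 f t = f := by
      intro t
      funext n
      unfold boxfn
      rw [Finset.univ_unique, Finset.prod_singleton]
      norm_num
    have hsum : (∑ r ∈ Fintype.piFinset (fun _ : Fin 0 => Finset.Icc 1 (R - 1)),
        ‖Aavg a b (boxfn 0 f (fun ℓ => ((r ℓ * m ℓ : ℕ) : ℤ)))‖)
        = ‖Aavg a b f‖ := by
      rw [Finset.sum_congr rfl (fun r _ => by rw [hbox])]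
      rw [Finset.sum_const, Fintype.card_piFinset]
      simp
    rw [hsum]
    have h1 : (0:ℝ) ≤ (R:ℝ)⁻¹ := by positivity
    have h2 : (0:ℝ) ≤ (∑ ℓ : Fin 0, (m ℓ : ℝ)) * R / (Finset.Icc a b).card := by
      have : (0:ℝ) ≤ (∑ ℓ : Fin 0, (m ℓ : ℝ)) := Finset.sum_nonneg (fun ℓ _ => by positivity)
      positivity
    simp only [pow_zero, pow_one, inv_one, one_mul]
    linarith
  | succ Q ih =>
    obtain ⟨C, hC1, hC⟩ := ih
    refine ⟨12*C^2, by nlinarith, ?_⟩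
    intro a b hab f hf1 hf0 m hm R hR
    set N : ℝ := ((Finset.Icc a b).card : ℝ) with hN
    have hN1 : (1:ℝ) ≤ N := by
      rw [hN, Int.card_Icc]
      have : 1 ≤ (b + 1 - a).toNat := by omega
      exact_mod_cast this
    have hNpos : (0:ℝ) < N := by linarith
    have hRpos : (0:ℝ) < (R:ℝ) := by exact_mod_cast hR
    set m' : Fin Q → ℕ := fun ℓ => m ℓ.castSucc with hm'def
    have hm' : ∀ ℓ, 1 ≤ m' ℓ := fun ℓ => hm _
    set P := Fintype.piFinset (fun _ : Fin Q => Finset.Icc 1 (R - 1)) with hP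
    set P' := Fintype.piFinset (fun _ : Fin (Q+1) => Finset.Icc 1 (R - 1)) with hP'
    set x : (Fin Q → ℕ) → ℝ := fun r =>
      ‖Aavg a b (boxfn Q f (fun ℓ => ((r ℓ * m' ℓ : ℕ) : ℤ)))‖ with hx
    set x' : (Fin (Q+1) → ℕ) → ℝ := fun r =>
      ‖Aavg a b (boxfn (Q+1) f (fun ℓ => ((r ℓ * m ℓ : ℕ) : ℤ)))‖ with hx'
    set X : ℝ := ((R : ℝ) ^ Q)⁻¹ * ∑ r ∈ P, x r with hX
    set X' : ℝ := ((R : ℝ) ^ (Q+1))⁻¹ * ∑ r ∈ P', x' r with hX'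
    set E : ℝ := (∑ ℓ, (m' ℓ : ℝ)) * R / N + (R : ℝ)⁻¹ with hE
    set E' : ℝ := (∑ ℓ : Fin (Q+1), (m ℓ : ℝ)) * R / N + (R : ℝ)⁻¹ with hE'
    set c : ℝ := (m (Fin.last Q) : ℝ) * R / N + (R:ℝ)⁻¹ with hc
    have hIH : ‖Aavg a b f‖ ^ (2^Q) ≤ C * (X + E) := by
      have h := hC a b hab f hf1 hf0 m' hm' R hR
      rw [← hN, ← hP, ← hx, ← hX] at h
      have he : C * (X + E) = C * (X + (∑ ℓ, (m' ℓ : ℝ)) * R / N + (R:ℝ)⁻¹) := by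
        rw [hE]; ring
      rw [he]
      exact h
    have hx0 : ∀ r, 0 ≤ x r := fun r => norm_nonneg _
    have hx'0 : ∀ r, 0 ≤ x' r := fun r => norm_nonneg _
    have hX0 : 0 ≤ X := by
      rw [hX]
      exact mul_nonneg (by positivity) (Finset.sum_nonneg (fun r _ => hx0 r))
    have hX'0 : 0 ≤ X' := by
      rw [hX']
      exact mul_nonneg (by positivity) (Finset.sum_nonneg (fun r _ => hx'0 r))
    have hmsum : ∑ ℓ : Fin (Q+1), (m ℓ : ℝ) = (∑ ℓ, (m' ℓ : ℝ)) + m (Fin.last Q) := by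
      rw [Fin.sum_univ_castSucc]
    have hm'0 : (0:ℝ) ≤ (∑ ℓ, (m' ℓ : ℝ)) := Finset.sum_nonneg (fun ℓ _ => by positivity)
    have hE0 : 0 ≤ E := by rw [hE]; positivity
    have hE'0 : 0 ≤ E' := by
      rw [hE']
      have : (0:ℝ) ≤ (∑ ℓ : Fin (Q+1), (m ℓ : ℝ)) := Finset.sum_nonneg (fun ℓ _ => by positivity)
      positivity
    have hEE' : E ≤ E' := by
      rw [hE, hE', hmsum]
      have h1 : (0:ℝ) ≤ (m (Fin.last Q) : ℝ) := by positivity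
      gcongr
      linarith
    have hcE' : c ≤ E' := by
      rw [hc, hE', hmsum]
      gcongr
      linarith
    have hL1 : ‖Aavg a b f‖ ≤ 1 := abs_Aavg_le_one hf1
    have hEq : 12*C^2 * (X' + E')
        = 12*C^2 * (X' + (∑ ℓ : Fin (Q+1), (m ℓ : ℝ)) * R / N + (R:ℝ)⁻¹) := by
      rw [hE']; ring
    rw [← hEq]
    by_cases hcase : 1 ≤ E'
    · have hLpow : ‖Aavg a b f‖ ^ (2^(Q+1)) ≤ 1 :=
        pow_le_one₀ (norm_nonneg _) hL1
      calc ‖Aavg a b f‖ ^ (2^(Q+1)) ≤ 1 := hLpow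
        _ ≤ 12*C^2 * (X' + E') := by nlinarith
    · push_neg at hcase
      have hE1 : E ≤ 1 := by linarith
      have hcard : ((P.card : ℝ)) ≤ (R:ℝ)^Q := by
        rw [hP, Fintype.card_piFinset]
        have h1 : (Finset.Icc 1 (R-1)).card ≤ R := by rw [Nat.card_Icc]; omega
        push_cast
        calc ∏ _i : Fin Q, ((Finset.Icc 1 (R-1)).card : ℝ) ≤ ∏ _i : Fin Q, (R:ℝ) :=
              Finset.prod_le_prod (fun _ _ => by positivity) (fun i _ => by exact_mod_cast h1)
          _ = (R:ℝ)^Q := by rw [Finset.prod_const]; simp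
      have hXsq : X^2 ≤ ((R:ℝ)^Q)⁻¹ * ∑ r ∈ P, x r ^ 2 := by
        rw [hX, mul_pow]
        have h1 : (∑ r ∈ P, x r)^2 ≤ (P.card : ℝ) * ∑ r ∈ P, x r ^2 :=
          sq_sum_le_card_mul_sum_sq
        calc (((R:ℝ)^Q)⁻¹)^2 * (∑ r ∈ P, x r)^2
            ≤ (((R:ℝ)^Q)⁻¹)^2 * ((R:ℝ)^Q * ∑ r ∈ P, x r ^2) := by
              refine mul_le_mul_of_nonneg_left ?_ (by positivity)
              refine h1.trans (mul_le_mul_of_nonneg_right hcard ?_)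
              exact Finset.sum_nonneg (fun r _ => by positivity)
          _ = ((R:ℝ)^Q)⁻¹ * ∑ r ∈ P, x r ^2 := by
              have h2 : ((R:ℝ)^Q) ≠ 0 := by positivity
              field_simp
      have hstep : ∀ r ∈ P, x r ^2 ≤ 3 * ((R : ℝ)⁻¹ * (∑ s ∈ Finset.Icc 1 (R-1),
          x' (Fin.snoc r s)) + c) := by
        intro r _
        have h0 := vdc_step a b hab (boxfn Q f (fun ℓ => ((r ℓ * m' ℓ : ℕ) : ℤ)))
          (boxfn_bounded hf1 _) (fun n hn => boxfn_zero hf0 _ n hn)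
          (m (Fin.last Q)) (hm _) R hR
        have heq : ∀ s : ℕ, ‖Aavg a b
              (fun n => (starRingEnd ℂ)
                ((boxfn Q f (fun ℓ => ((r ℓ * m' ℓ : ℕ) : ℤ))) (n + ((s * m (Fin.last Q) : ℕ):ℤ)))
                * (boxfn Q f (fun ℓ => ((r ℓ * m' ℓ : ℕ) : ℤ))) n)‖
            = x' (Fin.snoc r s) := by
          intro s
          have htup : (fun ℓ : Fin (Q+1) => (((Fin.snoc r s : Fin (Q+1) → ℕ) ℓ * m ℓ : ℕ) : ℤ))
              = Fin.snoc (fun ℓ => ((r ℓ * m' ℓ : ℕ) : ℤ)) (((s * m (Fin.last Q) : ℕ) : ℤ)) := by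
            funext ℓ
            refine Fin.lastCases ?_ (fun i => ?_) ℓ
            · simp
            · simp [hm'def]
          have hfn : boxfn (Q+1) f (fun ℓ : Fin (Q+1) => (((Fin.snoc r s : Fin (Q+1) → ℕ) ℓ * m ℓ : ℕ) : ℤ))
              = (fun n => (starRingEnd ℂ)
                ((boxfn Q f (fun ℓ => ((r ℓ * m' ℓ : ℕ) : ℤ))) (n + ((s * m (Fin.last Q) : ℕ):ℤ)))
                * (boxfn Q f (fun ℓ => ((r ℓ * m' ℓ : ℕ) : ℤ))) n) := by
            funext n
            rw [htup, boxfn_succ]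
          rw [hx']
          show _ = ‖Aavg a b (boxfn (Q+1) f
            (fun ℓ : Fin (Q+1) => (((Fin.snoc r s : Fin (Q+1) → ℕ) ℓ * m ℓ : ℕ) : ℤ)))‖
          rw [hfn]
        calc x r ^2 ≤ 3 * ((R : ℝ)⁻¹ * ∑ s ∈ Finset.Icc 1 (R-1),
              ‖Aavg a b (fun n => (starRingEnd ℂ)
                ((boxfn Q f (fun ℓ => ((r ℓ * m' ℓ : ℕ) : ℤ))) (n + ((s * m (Fin.last Q) : ℕ):ℤ)))
                * (boxfn Q f (fun ℓ => ((r ℓ * m' ℓ : ℕ) : ℤ))) n)‖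
              + (m (Fin.last Q) : ℝ) * R / (Finset.Icc a b).card + (R : ℝ)⁻¹) := h0
          _ = 3 * ((R : ℝ)⁻¹ * (∑ s ∈ Finset.Icc 1 (R-1), x' (Fin.snoc r s)) + c) := by
              rw [Finset.sum_congr rfl (fun s _ => heq s), hc, ← hN]
              ring
      have hreindex : ∑ r ∈ P, ∑ s ∈ Finset.Icc 1 (R-1), x' (Fin.snoc r s)
          = ∑ r' ∈ P', x' r' := by
        rw [← Finset.sum_product']
        refine Finset.sum_nbij' (fun p => Fin.snoc p.1 p.2)
          (fun r' => (fun ℓ => r' ℓ.castSucc, r' (Fin.last Q))) ?_ ?_ ?_ ?_ ?_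
        · rintro ⟨r, s⟩ hp
          rw [Finset.mem_product] at hp
          rw [hP, Fintype.mem_piFinset] at hp
          rw [hP', Fintype.mem_piFinset]
          intro ℓ
          refine Fin.lastCases ?_ (fun i => ?_) ℓ
          · simpa using hp.2
          · simpa using hp.1 i
        · intro r' hr'
          rw [hP', Fintype.mem_piFinset] at hr'
          rw [Finset.mem_product]
          constructor
          · rw [hP, Fintype.mem_piFinset]
            intro i
            exact hr' _
          · exact hr' _
        · rintro ⟨r, s⟩ _
          refine Prod.ext ?_ ?_
          · funext i
            simp
          · simp
        · intro r' _
          funext ℓ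
          refine Fin.lastCases ?_ (fun i => ?_) ℓ
          · simp
          · simp
        · rintro ⟨r, s⟩ _
          rfl
      have hsum2 : ∑ r ∈ P, x r ^2
          ≤ 3 * ((R:ℝ)⁻¹ * ∑ r' ∈ P', x' r' + (P.card : ℝ) * c) := by
        calc ∑ r ∈ P, x r ^2
            ≤ ∑ r ∈ P, 3 * ((R : ℝ)⁻¹ * (∑ s ∈ Finset.Icc 1 (R-1), x' (Fin.snoc r s)) + c) :=
              Finset.sum_le_sum hstep
          _ = 3 * ((R:ℝ)⁻¹ * ∑ r ∈ P, ∑ s ∈ Finset.Icc 1 (R-1), x' (Fin.snoc r s)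
                + (P.card : ℝ) * c) := by
              have expand : ∀ r : Fin Q → ℕ,
                  3 * ((R:ℝ)⁻¹ * (∑ s ∈ Finset.Icc 1 (R-1), x' (Fin.snoc r s)) + c)
                    = 3*(R:ℝ)⁻¹ * (∑ s ∈ Finset.Icc 1 (R-1), x' (Fin.snoc r s)) + 3*c :=
                fun r => by ring
              rw [Finset.sum_congr rfl (fun r _ => expand r), Finset.sum_add_distrib,
                ← Finset.mul_sum, Finset.sum_const, nsmul_eq_mul]
              ring
          _ = 3 * ((R:ℝ)⁻¹ * ∑ r' ∈ P', x' r' + (P.card : ℝ) * c) := by rw [hreindex]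
      have hc0 : 0 ≤ c := by rw [hc]; positivity
      have hXsq2 : X^2 ≤ 3 * (X' + c) := by
        have h1 : ((R:ℝ)^Q)⁻¹ * (P.card:ℝ) ≤ 1 := by
          have h2 : ((P.card:ℝ))/(R:ℝ)^Q ≤ 1 :=
            (div_le_one (by positivity : (0:ℝ) < (R:ℝ)^Q)).mpr hcard
          rw [div_eq_inv_mul] at h2
          exact h2
        calc X^2 ≤ ((R:ℝ)^Q)⁻¹ * ∑ r ∈ P, x r ^2 := hXsq
          _ ≤ ((R:ℝ)^Q)⁻¹ * (3 * ((R:ℝ)⁻¹ * ∑ r' ∈ P', x' r' + (P.card : ℝ) * c)) :=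
              mul_le_mul_of_nonneg_left hsum2 (by positivity)
          _ = 3 * (((R:ℝ)^(Q+1))⁻¹ * ∑ r' ∈ P', x' r' + (((R:ℝ)^Q)⁻¹ * (P.card : ℝ)) * c) := by
              rw [pow_succ, mul_inv]
              ring
          _ ≤ 3 * (X' + 1 * c) := by
              rw [hX']
              have hsum'0 : 0 ≤ ∑ r' ∈ P', x' r' := Finset.sum_nonneg (fun r _ => hx'0 r)
              linarith [mul_le_mul_of_nonneg_right h1 hc0]
          _ = 3 * (X' + c) := by ring
      have hfin : ‖Aavg a b f‖ ^ (2^(Q+1)) ≤ (C*(X+E))^2 := by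
        rw [pow_succ, pow_mul]
        exact pow_le_pow_left₀ (by positivity) hIH 2
      have h3 : (X+E)^2 ≤ 2*X^2 + 2*E^2 := by nlinarith [sq_nonneg (X-E)]
      have h4 : E^2 ≤ E' := by nlinarith
      have h5 : X^2 ≤ 3*X' + 3*E' := by nlinarith
      have h6 : (X+E)^2 ≤ 6*X' + 8*E' := by linarith
      calc ‖Aavg a b f‖ ^ (2^(Q+1)) ≤ (C*(X+E))^2 := hfin
        _ = C^2*(X+E)^2 := by ring
        _ ≤ C^2*(6*X'+8*E') := mul_le_mul_of_nonneg_left h6 (sq_nonneg C)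
        _ ≤ 12*C^2*(X'+E') := by
            nlinarith [mul_nonneg (sq_nonneg C) hX'0, mul_nonneg (sq_nonneg C) hE'0]

theorem stmt12 (Q : ℕ) (hQ : 1 ≤ Q) :
    ∃ C > (0:ℝ), ∀ a b : ℤ, a ≤ b → ∀ g : ℤ → ℂ,
      (∀ n ∈ Finset.Icc a b, ‖g n‖ = 1) →
      (∀ n ∉ Finset.Icc a b, g n = 0) →
      ∀ m : Fin Q → ℕ, (∀ ℓ, 1 ≤ m ℓ) → ∀ R : ℕ, 1 ≤ R →
      ‖((Finset.Icc a b).card : ℂ)⁻¹ * ∑ n ∈ Finset.Icc a b, g n‖ ^ (2 ^ Q)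
        ≤ C * (((R : ℝ) ^ Q)⁻¹ *
              (∑ r ∈ Fintype.piFinset (fun _ : Fin Q => Finset.Icc 1 (R - 1)),
                ‖((Finset.Icc a b).card : ℂ)⁻¹ *
                  ∑ n ∈ Finset.Icc a b,
                    ∏ ε : Fin Q → Bool,
                      (if Even (Finset.univ.filter (fun ℓ => ε ℓ = true)).card then
                        g (n + ∑ ℓ, (if ε ℓ then ((r ℓ * m ℓ : ℕ) : ℤ) else 0))
                      else
                        (starRingEnd ℂ)
                          (g (n + ∑ ℓ, (if ε ℓ then ((r ℓ * m ℓ : ℕ) : ℤ) else 0))))‖)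
            + (∑ ℓ, (m ℓ : ℝ)) * R / (Finset.Icc a b).card
            + (R : ℝ)⁻¹) := by
  obtain ⟨C, hC1, hC⟩ := key Q
  refine ⟨C, by linarith, ?_⟩
  intro a b hab g hg1 hg0 m hm R hR
  have hb : ∀ n, ‖g n‖ ≤ 1 := by
    intro n
    by_cases h : n ∈ Finset.Icc a b
    · exact le_of_eq (hg1 n h)
    · simp [hg0 n h]
  exact hC a b hab g hb hg0 m hm R hR
end
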